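/- arXiv:1911.04841 — 2 statements merged into one kernel-verified Lean document; each statement's English description precedes it below -/
import Mathlib

section
/- Let M̂ be a real-valued random variable with μ̂₁ = E[M̂] > 0 and μ̂₂ = E[M̂²] < ∞. Suppose R̂ and R are real numbers with R̂ = P(M̂ ≤ 0), R̂ ≥ (1 − β) + βR for some β ≥ 1. Then R ≤ 1 − (1/β)·(μ̂₁²/μ̂₂). -/
open MeasureTheory ProbabilityTheory

/-- Probabilistic C-bound with imperfect labels (Proposition 2). -/
theorem cbound_imperfect_labels {Ω : Type*} [MeasureSpace Ω]
    [IsProbabilityMeasure (ℙ : Measure Ω)]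
    (M : Ω → ℝ) (hM : MemLp M 2 ℙ) (hμ₁ : 0 < ∫ ω, M ω)
    (R Rhat β : ℝ) (hβ : 1 ≤ β)
    (hRhat : Rhat = (ℙ {ω | M ω ≤ 0}).toReal)
    (hChit : (1 - β) + β * R ≤ Rhat) :
    R ≤ 1 - (1 / β) * ((∫ ω, M ω) ^ 2 / (∫ ω, (M ω) ^ 2)) := by
  -- replace M by a strongly measurable representative N
  set N : Ω → ℝ := hM.1.mk M with hN
  have hNsm : StronglyMeasurable N := hM.1.stronglyMeasurable_mk
  have hae : M =ᵐ[ℙ] N := hM.1.ae_eq_mk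
  have hMN : MemLp N 2 ℙ := hM.ae_eq hae
  have hint1 : ∫ ω, M ω = ∫ ω, N ω := integral_congr_ae hae
  have hint2 : ∫ ω, (M ω) ^ 2 = ∫ ω, (N ω) ^ 2 := by
    refine integral_congr_ae ?_
    filter_upwards [hae] with ω h
    rw [h]
  have hmeas : MeasurableSet {ω | 0 < N ω} :=
    measurableSet_lt measurable_const hNsm.measurable
  have hsetae : ℙ {ω | M ω ≤ 0} = ℙ {ω | N ω ≤ 0} := by
    refine measure_congr ?_
    filter_upwards [hae] with ω h
    simp only [Set.mem_setOf_eq, eq_iff_iff]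
    change M ω ≤ 0 ↔ N ω ≤ 0
    rw [h]
  set pS : ℝ := (ℙ {ω | 0 < N ω}).toReal with hpS
  have hpS1 : pS ≤ 1 := by
    rw [hpS]
    exact (ENNReal.toReal_le_of_le_ofReal zero_le_one (by simpa using prob_le_one))
  have hpS0 : 0 ≤ pS := ENNReal.toReal_nonneg
  -- Rhat = 1 - pS
  have hcompl : Rhat = 1 - pS := by
    rw [hRhat, hsetae]
    have : {ω | N ω ≤ 0} = {ω | 0 < N ω}ᶜ := by
      ext ω; simp [not_lt]
    rw [this, measure_compl hmeas (measure_ne_top _ _), measure_univ]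
    rw [ENNReal.toReal_sub_of_le (prob_le_one) (by simp)]
    simp [hpS]
  -- Cauchy–Schwarz: μ₁ ≤ sqrt(μ₂) * sqrt(pS)
  set f : Ω → ℝ := fun ω => max (N ω) 0 with hf
  set g : Ω → ℝ := Set.indicator {ω | 0 < N ω} (fun _ => (1:ℝ)) with hg
  have hconj : Real.HolderConjugate 2 2 := ⟨by norm_num, two_pos, two_pos⟩
  have hofReal : ENNReal.ofReal (2:ℝ) = 2 := by norm_num
  have hfmem : MemLp f (ENNReal.ofReal (2:ℝ)) ℙ := by
    rw [hofReal]
    exact hMN.sup (memLp_const 0)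
  have hgmem : MemLp g (ENNReal.ofReal (2:ℝ)) ℙ := by
    rw [hofReal]
    exact MemLp.indicator hmeas (memLp_const 1)
  have hfnn : 0 ≤ᵐ[ℙ] f := Filter.Eventually.of_forall fun ω => le_max_right _ _
  have hgnn : 0 ≤ᵐ[ℙ] g := Filter.Eventually.of_forall fun ω =>
    Set.indicator_nonneg (fun _ _ => zero_le_one) _
  have holder := integral_mul_le_Lp_mul_Lq_of_nonneg hconj hfnn hgnn hfmem hgmem
  -- ∫ f * g = ∫ f and N ≤ f pointwise on the right set
  have hfg : ∀ ω, N ω ≤ f ω * g ω := by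
    intro ω
    by_cases h : 0 < N ω
    · simp [hf, hg, Set.indicator_of_mem, h, le_max_left, max_eq_left h.le]
    · push_neg at h
      simp [hf, hg, Set.indicator_of_notMem, not_lt.mpr h, h]
  have hintN : Integrable N ℙ := hMN.integrable (by norm_num)
  have hfgf : (fun ω => f ω * g ω) = f := by
    funext ω
    by_cases h : 0 < N ω
    · simp [hf, hg, Set.indicator_of_mem, h]
    · simp [hf, hg, Set.indicator_of_notMem, not_lt.mpr (not_lt.mp h),
        max_eq_right (not_lt.mp h)]
  have hintf : Integrable f ℙ := by
    have := hfmem; rw [hofReal] at this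
    exact this.integrable (by norm_num)
  have hintfg : Integrable (fun ω => f ω * g ω) ℙ := by rw [hfgf]; exact hintf
  have hμ₁le : ∫ ω, N ω ≤ ∫ ω, f ω * g ω := integral_mono hintN hintfg hfg
  -- compute the two Lp factors
  have hf2 : ∫ ω, f ω ^ (2:ℝ) ≤ ∫ ω, (N ω) ^ 2 := by
    have h1 : ∀ ω, f ω ^ (2:ℝ) = f ω ^ (2:ℕ) := fun ω =>
      Real.rpow_natCast _ 2
    calc ∫ ω, f ω ^ (2:ℝ) = ∫ ω, f ω ^ (2:ℕ) := by simp_rw [h1]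
      _ ≤ ∫ ω, (N ω) ^ 2 := by
          refine integral_mono ?_ hMN.integrable_sq fun ω => ?_
          · have := hfmem; rw [hofReal] at this
            simpa using this.integrable_sq
          · rcases le_or_gt (N ω) 0 with h | h
            · simp [hf, max_eq_right h]
              positivity
            · simp [hf, max_eq_left h.le]
  have hg2 : ∫ ω, g ω ^ (2:ℝ) = pS := by
    have h1 : ∀ ω, g ω ^ (2:ℝ) = g ω := by
      intro ω
      by_cases h : ω ∈ {ω | 0 < N ω}
      · simp [hg, Set.indicator_of_mem h]
      · simp [hg, Set.indicator_of_notMem h, Real.zero_rpow (by norm_num : (2:ℝ) ≠ 0)]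
    simp_rw [h1]
    rw [hg, integral_indicator_const _ hmeas]
    simp [hpS, measureReal_def]
  -- combine
  have hf2nn : 0 ≤ ∫ ω, f ω ^ (2:ℝ) := by
    refine integral_nonneg fun ω => ?_
    exact Real.rpow_nonneg (le_max_right _ _) _
  have hμ₂nn : 0 ≤ ∫ ω, (N ω) ^ 2 := integral_nonneg fun ω => sq_nonneg _
  have hkey : (∫ ω, N ω) ^ 2 ≤ (∫ ω, (N ω) ^ 2) * pS := by
    have h1 : ∫ ω, N ω ≤ (∫ ω, (N ω) ^ 2) ^ ((1:ℝ)/2) * pS ^ ((1:ℝ)/2) := by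
      calc ∫ ω, N ω ≤ ∫ ω, f ω * g ω := hμ₁le
        _ ≤ (∫ ω, f ω ^ (2:ℝ)) ^ ((1:ℝ)/2) * (∫ ω, g ω ^ (2:ℝ)) ^ ((1:ℝ)/2) := holder
        _ ≤ (∫ ω, (N ω) ^ 2) ^ ((1:ℝ)/2) * pS ^ ((1:ℝ)/2) := by
            rw [hg2]
            exact mul_le_mul_of_nonneg_right
              (Real.rpow_le_rpow hf2nn hf2 (by norm_num))
              (Real.rpow_nonneg hpS0 _)
    have h2 : ((∫ ω, (N ω) ^ 2) ^ ((1:ℝ)/2) * pS ^ ((1:ℝ)/2)) ^ 2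
        = (∫ ω, (N ω) ^ 2) * pS := by
      rw [mul_pow, ← Real.rpow_natCast ((∫ ω, (N ω) ^ 2) ^ ((1:ℝ)/2)) 2,
        ← Real.rpow_natCast (pS ^ ((1:ℝ)/2)) 2,
        ← Real.rpow_mul hμ₂nn, ← Real.rpow_mul hpS0]
      norm_num
    have h3 : 0 ≤ (∫ ω, (N ω) ^ 2) ^ ((1:ℝ)/2) * pS ^ ((1:ℝ)/2) :=
      mul_nonneg (Real.rpow_nonneg hμ₂nn _) (Real.rpow_nonneg hpS0 _)
    calc (∫ ω, N ω) ^ 2 ≤ ((∫ ω, (N ω) ^ 2) ^ ((1:ℝ)/2) * pS ^ ((1:ℝ)/2)) ^ 2 := by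
          nlinarith [hμ₁.trans_le (hint1.le.trans' le_rfl)]
      _ = (∫ ω, (N ω) ^ 2) * pS := h2
  rw [hint1, hint2]
  rw [hint1] at hμ₁
  set μ₁ := ∫ ω, N ω
  set μ₂ := ∫ ω, (N ω) ^ 2
  have hμ₂pos : 0 < μ₂ := by nlinarith
  have hβ0 : (0:ℝ) < β := lt_of_lt_of_le one_pos hβ
  have hple : μ₁ ^ 2 / μ₂ ≤ pS := by
    rw [div_le_iff₀ hμ₂pos]; linarith [hkey, mul_comm μ₂ pS]
  have hRle : Rhat ≤ 1 - μ₁ ^ 2 / μ₂ := by rw [hcompl]; linarith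
  have ht : β * R ≤ β - μ₁ ^ 2 / μ₂ := by linarith
  have : β * R ≤ β * (1 - (1/β) * (μ₁ ^ 2 / μ₂)) := by
    rw [mul_sub, mul_one, ← mul_assoc, mul_one_div, div_self hβ0.ne', one_mul]
    exact ht
  exact le_of_mul_le_mul_left this hβ0
end

section
/- Let M̂ be a real-valued random variable with μ̂₁ = E[M̂] > 0 and μ̂₂ = E[M̂²] < ∞, and let R, β, γ be reals with 1 ≤ β ≤ γ and P(M̂ ≤ 0) ≥ (1 − β) + βR. Then R ≤ 1 − (1/γ)·(μ̂₁²/μ̂₂). -/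
open MeasureTheory ProbabilityTheory

/-- Key step: second-moment (Paley–Zygmund type) bound for a strongly measurable
function: `ℙ(M ≤ 0) ≤ 1 - μ₁² / μ₂`. -/
theorem cbound_aux {Ω : Type*} [MeasureSpace Ω]
    [IsProbabilityMeasure (ℙ : Measure Ω)]
    (M : Ω → ℝ) (hsm : StronglyMeasurable M) (hM : MemLp M 2 ℙ) (hμ₁ : 0 < ∫ ω, M ω) :
    (ℙ {ω | M ω ≤ 0}).toReal ≤ 1 - (∫ ω, M ω) ^ 2 / (∫ ω, (M ω) ^ 2) := by
  have hmeas : Measurable M := hsm.measurable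
  set s : Set Ω := {ω | 0 < M ω} with hs_def
  have hs : MeasurableSet s := measurableSet_lt measurable_const hmeas
  set f : Ω → ℝ := fun ω => max (M ω) 0 with hf_def
  set g : Ω → ℝ := s.indicator (fun _ => (1 : ℝ)) with hg_def
  have hf2 : MemLp f 2 ℙ := hM.pos_part
  have hg2 : MemLp g 2 ℙ :=
    memLp_indicator_const 2 hs (1 : ℝ) (Or.inr (measure_ne_top _ _))
  -- pointwise: f * g = f
  have hfg : ∀ ω, f ω * g ω = f ω := by
    intro ω
    by_cases h : ω ∈ s
    · simp [hg_def, Set.indicator_of_mem h]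
    · have hM0 : M ω ≤ 0 := not_lt.1 h
      simp [hg_def, hf_def, Set.indicator_of_notMem h, max_eq_right hM0]
  have hpq : Real.HolderConjugate 2 2 := by
    constructor <;> norm_num
  have hCS := integral_mul_le_Lp_mul_Lq_of_nonneg hpq
      (Filter.Eventually.of_forall fun ω => le_max_right _ _)
      (Filter.Eventually.of_forall fun ω => Set.indicator_nonneg (fun _ _ => zero_le_one) ω)
      (by simpa using hf2) (by simpa using hg2)
  -- identify the pieces
  have h1 : ∫ ω, f ω * g ω = ∫ ω, f ω := by
    refine integral_congr_ae (Filter.Eventually.of_forall hfg)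
  have hMf : ∫ ω, M ω ≤ ∫ ω, f ω :=
    integral_mono (hM.integrable one_le_two) (hf2.integrable one_le_two)
      (fun ω => le_max_left _ _)
  have hf2M : ∫ ω, f ω ^ (2 : ℝ) ≤ ∫ ω, (M ω) ^ 2 := by
    have : ∀ ω, f ω ^ (2 : ℝ) = f ω ^ 2 := fun ω => by
      rw [show ((2 : ℝ)) = ((2 : ℕ) : ℝ) by norm_num, Real.rpow_natCast]
    simp_rw [this]
    refine integral_mono hf2.integrable_sq hM.integrable_sq fun ω => ?_
    have h1 : |f ω| ≤ |M ω| := by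
      rcases le_or_gt (M ω) 0 with h | h
      · simp [hf_def, max_eq_right h]
      · simp [hf_def, max_eq_left h.le]
    calc f ω ^ 2 = |f ω| ^ 2 := (sq_abs _).symm
      _ ≤ |M ω| ^ 2 := pow_le_pow_left₀ (abs_nonneg _) h1 2
      _ = (M ω) ^ 2 := sq_abs _
  have hg2int : ∫ ω, g ω ^ (2 : ℝ) = (ℙ s).toReal := by
    have : ∀ ω, g ω ^ (2 : ℝ) = g ω := by
      intro ω
      by_cases h : ω ∈ s
      · simp [hg_def, Set.indicator_of_mem h]
      · simp [hg_def, Set.indicator_of_notMem h,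
          Real.zero_rpow (by norm_num : (2:ℝ) ≠ 0)]
    simp_rw [this, hg_def]
    rw [integral_indicator_const (1 : ℝ) hs]
    simp [Measure.real]
  set μ₁ := ∫ ω, M ω
  set μ₂ := ∫ ω, (M ω) ^ 2 with hμ₂def
  set P := (ℙ s).toReal with hPdef
  have hP0 : 0 ≤ P := ENNReal.toReal_nonneg
  have hμ₂0 : 0 ≤ μ₂ := integral_nonneg fun ω => sq_nonneg _
  have hfsq0 : 0 ≤ ∫ ω, f ω ^ (2 : ℝ) :=
    integral_nonneg fun ω => Real.rpow_nonneg (le_max_right _ _) _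
  -- μ₁ ≤ μ₂^(1/2) * P^(1/2)
  have hkey : μ₁ ≤ μ₂ ^ (1/2 : ℝ) * P ^ (1/2 : ℝ) := by
    calc μ₁ ≤ ∫ ω, f ω := hMf
      _ = ∫ ω, f ω * g ω := h1.symm
      _ ≤ (∫ ω, f ω ^ (2:ℝ)) ^ (1/2 : ℝ) * (∫ ω, g ω ^ (2:ℝ)) ^ (1/2 : ℝ) := hCS
      _ ≤ μ₂ ^ (1/2 : ℝ) * P ^ (1/2 : ℝ) := by
          rw [hg2int]
          exact mul_le_mul_of_nonneg_right
            (Real.rpow_le_rpow hfsq0 hf2M (by norm_num))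
            (Real.rpow_nonneg hP0 _)
  have hsq : μ₁ ^ 2 ≤ μ₂ * P := by
    have h2 : μ₁ ^ 2 ≤ (μ₂ ^ (1/2 : ℝ) * P ^ (1/2 : ℝ)) ^ 2 :=
      pow_le_pow_left₀ hμ₁.le hkey 2
    calc μ₁ ^ 2 ≤ (μ₂ ^ (1/2:ℝ) * P ^ (1/2:ℝ)) ^ 2 := h2
      _ = (μ₂ ^ (1/2:ℝ)) ^ 2 * (P ^ (1/2:ℝ)) ^ 2 := by ring
      _ = μ₂ * P := by
          rw [← Real.rpow_natCast (μ₂ ^ (1/2:ℝ)) 2, ← Real.rpow_natCast (P ^ (1/2:ℝ)) 2,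
            ← Real.rpow_mul hμ₂0, ← Real.rpow_mul hP0]
          norm_num
  have hP1 : P ≤ 1 := by
    rw [hPdef]
    exact ENNReal.toReal_le_of_le_ofReal zero_le_one (by simpa using prob_le_one)
  have hμ₂pos : 0 < μ₂ := by nlinarith [sq_nonneg μ₁]
  -- measure of the complement
  have hcompl : (ℙ {ω | M ω ≤ 0}).toReal = 1 - P := by
    have hset : {ω | M ω ≤ 0} = sᶜ := by
      ext ω; simp [hs_def, not_lt]
    rw [hset, prob_compl_eq_one_sub hs, hPdef,
      ENNReal.toReal_sub_of_le prob_le_one ENNReal.one_ne_top]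
    simp
  rw [hcompl]
  have : μ₁ ^ 2 / μ₂ ≤ P := (div_le_iff₀ hμ₂pos).2 (by linarith [hsq])
  linarith

/-- C-bound with imperfect labels and the `γ`-correction (Theorem 3). -/
theorem cbound_imperfect_labels_gamma {Ω : Type*} [MeasureSpace Ω]
    [IsProbabilityMeasure (ℙ : Measure Ω)]
    (M : Ω → ℝ) (hM : MemLp M 2 ℙ) (hμ₁ : 0 < ∫ ω, M ω)
    (R β γ : ℝ) (hβ : 1 ≤ β) (hβγ : β ≤ γ)
    (hChit : (1 - β) + β * R ≤ (ℙ {ω | M ω ≤ 0}).toReal) :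
    R ≤ 1 - (1 / γ) * ((∫ ω, M ω) ^ 2 / (∫ ω, (M ω) ^ 2)) := by
  -- replace M by a measurable representative
  set M' := hM.1.mk M with hM'def
  have haeq : M =ᵐ[ℙ] M' := hM.1.ae_eq_mk
  have hM' : MemLp M' 2 ℙ := hM.ae_eq haeq
  have hint1 : ∫ ω, M ω = ∫ ω, M' ω := integral_congr_ae haeq
  have hint2 : ∫ ω, (M ω) ^ 2 = ∫ ω, (M' ω) ^ 2 :=
    integral_congr_ae (haeq.mono fun ω h => by simp only [h])
  have hsets : ℙ {ω | M ω ≤ 0} = ℙ {ω | M' ω ≤ 0} := by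
    refine measure_congr ?_
    filter_upwards [haeq] with ω h
    show (M ω ≤ 0) = (M' ω ≤ 0)
    rw [h]
  have haux := cbound_aux M' hM.1.stronglyMeasurable_mk hM' (hint1 ▸ hμ₁)
  rw [hint1, hint2]
  rw [hsets] at hChit
  set q := (∫ ω, M' ω) ^ 2 / (∫ ω, (M' ω) ^ 2) with hq
  have hq0 : 0 ≤ q := div_nonneg (sq_nonneg _) (integral_nonneg fun ω => sq_nonneg _)
  have hβ0 : (0 : ℝ) < β := lt_of_lt_of_le one_pos hβ
  have hγ0 : (0 : ℝ) < γ := lt_of_lt_of_le hβ0 hβγ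
  have hRβ : R ≤ 1 - q / β := by
    calc R ≤ (β - q) / β := (le_div_iff₀ hβ0).2 (by linarith)
      _ = 1 - q / β := by field_simp
  have hdiv : q / γ ≤ q / β := div_le_div_of_nonneg_left hq0 hβ0 hβγ
  calc R ≤ 1 - q / β := hRβ
    _ ≤ 1 - q / γ := by linarith
    _ = 1 - (1/γ) * q := by ring
end
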